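/- arXiv:1401.0840 — 3 statements merged into one kernel-verified Lean document; each statement's English description precedes it below -/
import Mathlib

section
/- Let f, g : X → ℝ be Lipschitz functions on a metric space X, let φ : ℝ → ℝ be a C¹ function with 0 ≤ φ' ≤ 1, and let ψ : [0,∞) → ℝ be a convex nondecreasing function. Define f̃ := f + φ(g − f) and g̃ := g − φ(g − f). Then for every x ∈ X, ψ(|Df̃|(x)) + ψ(|Dg̃|(x)) ≤ ψ(|Df|(x)) + ψ(|Dg|(x)), where |Dh|(x) := limsup_{y→x} |h(y)−h(x)|/d(y,x) is the local Lipschitz constant. -/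
open Filter Topology Set

/-- The local Lipschitz constant (slope) of `h` at `x`:
`|Dh|(x) = limsup_{y→x} |h(y) − h(x)| / d(y,x)`. -/
noncomputable def localSlope {X : Type*} [MetricSpace X] (h : X → ℝ) (x : X) : ℝ :=
  Filter.limsup (fun y => |h y - h x| / dist y x) (𝓝[≠] x)

private lemma aux_limsup_const_mul_le {ι : Type*} (F : Filter ι) [F.NeBot]
    (u : ι → ℝ) (a K : ℝ) (ha : 0 ≤ a)
    (hu0 : ∀ i, 0 ≤ u i) (huK : ∀ i, u i ≤ K) :
    limsup (fun i => a * u i) F ≤ a * limsup u F := by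
  have h := limsup_mul_le (f := F) (u := fun _ => a) (v := u)
    (Eventually.of_forall fun _ => ha).frequently (isBoundedUnder_of ⟨a, fun _ => le_rfl⟩)
    (Eventually.of_forall hu0) (isBoundedUnder_of ⟨K, huK⟩)
  simpa [limsup_const, Pi.mul_def] using h

private lemma aux_limsup_combo {ι : Type*} (F : Filter ι) [F.NeBot]
    (p q w θ : ι → ℝ) (Kp Kq lam : ℝ)
    (hlam0 : 0 ≤ lam) (hlam1 : lam ≤ 1)
    (hp0 : ∀ i, 0 ≤ p i) (hpK : ∀ i, p i ≤ Kp)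
    (hq0 : ∀ i, 0 ≤ q i) (hqK : ∀ i, q i ≤ Kq)
    (hθ0 : ∀ i, 0 ≤ θ i) (hθ1 : ∀ i, θ i ≤ 1)
    (hθ : Tendsto θ F (𝓝 lam))
    (hw0 : ∀ i, 0 ≤ w i)
    (hw : ∀ i, w i ≤ (1 - θ i) * p i + θ i * q i) :
    limsup w F ≤ (1 - lam) * limsup p F + lam * limsup q F := by
  obtain ⟨i₀⟩ : Nonempty ι := nonempty_of_neBot F
  have hKp : 0 ≤ Kp := (hp0 i₀).trans (hpK i₀)
  have hKq : 0 ≤ Kq := (hq0 i₀).trans (hqK i₀)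
  set C : ℝ := Kp + Kq with hC
  have hC0 : 0 ≤ C := add_nonneg hKp hKq
  refine le_of_forall_pos_le_add fun ε hε => ?_
  set δ : ℝ := ε / (C + 1) with hδdef
  have hδ : 0 < δ := div_pos hε (by linarith)
  have hev : ∀ᶠ i in F, |θ i - lam| < δ := by
    have := Metric.tendsto_nhds.mp hθ δ hδ
    simpa [Real.dist_eq] using this
  -- pointwise estimate
  have key : ∀ᶠ i in F, w i ≤ (1 - lam) * p i + (lam * q i + ε) := by
    filter_upwards [hev] with i hi
    have h1 := hw i
    have h2 := abs_lt.mp hi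
    have hδC : δ * C ≤ ε := by
      rw [hδdef, hC]
      rw [div_mul_eq_mul_div, div_le_iff₀ (by linarith : (0:ℝ) < C + 1)]
      nlinarith
    nlinarith [hp0 i, hpK i, hq0 i, hqK i, hθ0 i, hθ1 i,
      mul_le_mul_of_nonneg_right h2.2.le (hp0 i),
      mul_le_mul_of_nonneg_right h2.2.le (hq0 i),
      mul_le_mul_of_nonneg_right h2.1.le (hp0 i),
      mul_le_mul_of_nonneg_right h2.1.le (hq0 i)]
  have bd1 : IsBoundedUnder (· ≤ ·) F (fun i => (1 - lam) * p i + (lam * q i + ε)) :=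
    isBoundedUnder_of ⟨(1 - lam) * Kp + (lam * Kq + ε), fun i => by
      have := hpK i; have := hqK i
      nlinarith [hp0 i, hq0 i]⟩
  have cbw : IsCoboundedUnder (· ≤ ·) F w :=
    (isBoundedUnder_of ⟨(0:ℝ), hw0⟩ :
      IsBoundedUnder (· ≥ ·) F w).isCoboundedUnder_le
  calc limsup w F ≤ limsup (fun i => (1 - lam) * p i + (lam * q i + ε)) F :=
        limsup_le_limsup key cbw bd1
    _ ≤ limsup (fun i => (1 - lam) * p i) F + limsup (fun i => lam * q i + ε) F := by
        refine limsup_add_le (u := fun i => (1 - lam) * p i) (v := fun i => lam * q i + ε)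
          (isBoundedUnder_of ⟨0, fun i => mul_nonneg (by linarith) (hp0 i)⟩)
          (isBoundedUnder_of ⟨(1 - lam) * Kp, fun i =>
            mul_le_mul_of_nonneg_left (hpK i) (by linarith)⟩)
          ((isBoundedUnder_of ⟨ε, fun i => by nlinarith [hq0 i] ⟩ :
            IsBoundedUnder (· ≥ ·) F _).isCoboundedUnder_le)
          (isBoundedUnder_of ⟨lam * Kq + ε, fun i => by
            nlinarith [hqK i, hq0 i]⟩)
    _ ≤ limsup (fun i => (1 - lam) * p i) F + (limsup (fun i => lam * q i) F + ε) := by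
        gcongr
        refine le_trans (limsup_add_le (u := fun i => lam * q i) (v := fun _ => ε)
          (isBoundedUnder_of ⟨0, fun i => mul_nonneg hlam0 (hq0 i)⟩)
          (isBoundedUnder_of ⟨lam * Kq, fun i => mul_le_mul_of_nonneg_left (hqK i) hlam0⟩)
          ((isBoundedUnder_of ⟨ε, fun _ => le_rfl⟩ :
            IsBoundedUnder (· ≥ ·) F _).isCoboundedUnder_le)
          (isBoundedUnder_of ⟨ε, fun _ => le_rfl⟩)) ?_
        simp [limsup_const]
    _ ≤ (1 - lam) * limsup p F + (lam * limsup q F + ε) := by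
        gcongr
        · exact aux_limsup_const_mul_le F p (1 - lam) Kp (by linarith) hp0 hpK
        · exact aux_limsup_const_mul_le F q lam Kq hlam0 hq0 hqK
    _ = (1 - lam) * limsup p F + lam * limsup q F + ε := by ring

private lemma aux_slope_nonneg {X : Type*} [MetricSpace X] {x : X}
    (hx : (𝓝[≠] x).NeBot) (w : X → ℝ) (K : ℝ)
    (h0 : ∀ y, 0 ≤ w y) (hK : ∀ y, w y ≤ K) :
    0 ≤ limsup w (𝓝[≠] x) :=
  le_limsup_of_frequently_le (Eventually.of_forall h0).frequently (isBoundedUnder_of ⟨K, hK⟩)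

private lemma aux_slope_le {X : Type*} [MetricSpace X] {x : X}
    (hx : (𝓝[≠] x).NeBot) (w : X → ℝ) (K : ℝ)
    (h0 : ∀ y, 0 ≤ w y) (hK : ∀ y, w y ≤ K) :
    limsup w (𝓝[≠] x) ≤ K :=
  limsup_le_of_le ((isBoundedUnder_of ⟨(0:ℝ), h0⟩ :
    IsBoundedUnder (· ≥ ·) _ w).isCoboundedUnder_le) (Eventually.of_forall hK)

private lemma aux_lip_bound {X : Type*} [MetricSpace X] {K : NNReal} {h : X → ℝ}
    (hh : LipschitzWith K h) (x y : X) : |h y - h x| / dist y x ≤ K := by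
  rcases (dist_nonneg : (0:ℝ) ≤ dist y x).eq_or_lt with h0 | h0
  · rw [← h0, div_zero]; exact K.coe_nonneg
  · rw [div_le_iff₀ h0]
    have := hh.dist_le_mul y x
    rwa [Real.dist_eq] at this

/-- For Lipschitz `f g : X → ℝ`, a `C¹` function `φ` with `0 ≤ φ' ≤ 1`,
and a convex nondecreasing `ψ : [0,∞) → ℝ`, setting `f̃ = f + φ(g−f)` and `g̃ = g − φ(g−f)`
one has `ψ(|Df̃|(x)) + ψ(|Dg̃|(x)) ≤ ψ(|Df|(x)) + ψ(|Dg|(x))` for every `x`. -/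
theorem slope_convex_exchange {X : Type*} [MetricSpace X]
    (hX : ∀ x : X, (𝓝[≠] x).NeBot)
    (f g : X → ℝ) (Kf Kg : NNReal)
    (hf : LipschitzWith Kf f) (hg : LipschitzWith Kg g)
    (φ : ℝ → ℝ) (hφ : ContDiff ℝ 1 φ)
    (hφ'0 : ∀ s, 0 ≤ deriv φ s) (hφ'1 : ∀ s, deriv φ s ≤ 1)
    (ψ : ℝ → ℝ) (hψconv : ConvexOn ℝ (Ici 0) ψ) (hψmono : MonotoneOn ψ (Ici 0))
    (x : X) :
    ψ (localSlope (fun y => f y + φ (g y - f y)) x)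
        + ψ (localSlope (fun y => g y - φ (g y - f y)) x)
      ≤ ψ (localSlope f x) + ψ (localSlope g x) := by
  haveI : (𝓝[≠] x).NeBot := hX x
  have hφdiff : Differentiable ℝ φ := hφ.differentiable one_ne_zero
  have hφmono : Monotone φ := monotone_of_deriv_nonneg hφdiff hφ'0
  have hφlip : LipschitzWith 1 φ := by
    refine lipschitzWith_of_nnnorm_deriv_le hφdiff fun s => ?_
    rw [← NNReal.coe_le_coe, coe_nnnorm, Real.norm_eq_abs,
      abs_of_nonneg (hφ'0 s)]
    exact hφ'1 s
  set a : ℝ := g x - f x with ha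
  set lam : ℝ := deriv φ a with hlam
  have hlam0 : 0 ≤ lam := hφ'0 a
  have hlam1 : lam ≤ 1 := hφ'1 a
  set b : X → ℝ := fun y => g y - f y with hb
  set θ : X → ℝ := fun y => if b y = a then lam else slope φ a (b y) with hθ
  -- basic properties of θ
  have hθid : ∀ y, φ (b y) - φ a = θ y * (b y - a) := by
    intro y
    by_cases hba : b y = a
    · simp [hθ, hba]
    · simp only [hθ, if_neg hba, slope_def_field]
      rw [div_mul_eq_mul_div, mul_div_assoc, div_self (sub_ne_zero.mpr hba), mul_one]
  have hθ01 : ∀ y, 0 ≤ θ y ∧ θ y ≤ 1 := by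
    intro y
    by_cases hba : b y = a
    · simp [hθ, hba, hlam0, hlam1]
    · simp only [hθ, if_neg hba, slope_def_field]
      have hlipb : |φ (b y) - φ a| ≤ |b y - a| := by
        have := hφlip.dist_le_mul (b y) a
        simpa [Real.dist_eq] using this
      rcases lt_or_gt_of_ne hba with hlt | hgt
      · have hnum0 : φ (b y) - φ a ≤ 0 := by
          have := hφmono hlt.le; linarith
        have hden : b y - a < 0 := by linarith
        have h1 : -(φ (b y) - φ a) ≤ -(b y - a) := by
          calc -(φ (b y) - φ a) ≤ |φ (b y) - φ a| := neg_le_abs _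
            _ ≤ |b y - a| := hlipb
            _ = -(b y - a) := abs_of_neg hden
        rw [show (φ (b y) - φ a) / (b y - a) = (-(φ (b y) - φ a)) / (-(b y - a)) by
          rw [neg_div_neg_eq]]
        exact ⟨div_nonneg (by linarith) (by linarith),
          (div_le_one (by linarith)).mpr h1⟩
      · have hnum0 : 0 ≤ φ (b y) - φ a := by
          have := hφmono hgt.le; linarith
        have hd : 0 < b y - a := by linarith
        have hnum1 : φ (b y) - φ a ≤ b y - a := by
          calc φ (b y) - φ a ≤ |φ (b y) - φ a| := le_abs_self _
            _ ≤ |b y - a| := hlipb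
            _ = b y - a := abs_of_pos hd
        exact ⟨div_nonneg hnum0 hd.le, (div_le_one hd).mpr hnum1⟩
  -- θ tends to lam
  have hθtendsto : Tendsto θ (𝓝[≠] x) (𝓝 lam) := by
    have hslope : Tendsto (slope φ a) (𝓝[≠] a) (𝓝 lam) :=
      hasDerivAt_iff_tendsto_slope.mp (hφdiff a).hasDerivAt
    rw [Metric.tendsto_nhds]
    intro ε hε
    have hev : ∀ᶠ t in 𝓝 a, t ∈ ({a}ᶜ : Set ℝ) → dist (slope φ a t) lam < ε := by
      rw [← eventually_nhdsWithin_iff]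
      exact Metric.tendsto_nhds.mp hslope ε hε
    have hbt : Tendsto b (𝓝[≠] x) (𝓝 a) :=
      ((hg.continuous.sub hf.continuous).continuousAt.tendsto).mono_left nhdsWithin_le_nhds
    filter_upwards [hbt.eventually hev] with y hy
    by_cases hba : b y = a
    · simp [hθ, hba, hε]
    · simpa [hθ, if_neg hba] using hy (by simpa using hba)
  -- the functions p, q and their bounds
  set p : X → ℝ := fun y => |f y - f x| / dist y x with hp
  set q : X → ℝ := fun y => |g y - g x| / dist y x with hq
  have hp0 : ∀ y, 0 ≤ p y := fun y => div_nonneg (abs_nonneg _) dist_nonneg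
  have hq0 : ∀ y, 0 ≤ q y := fun y => div_nonneg (abs_nonneg _) dist_nonneg
  have hpK : ∀ y, p y ≤ Kf := fun y => aux_lip_bound hf x y
  have hqK : ∀ y, q y ≤ Kg := fun y => aux_lip_bound hg x y
  -- pointwise estimates for the modified functions
  set w1 : X → ℝ := fun y => |(f y + φ (g y - f y)) - (f x + φ (g x - f x))| / dist y x with hw1
  set w2 : X → ℝ := fun y => |(g y - φ (g y - f y)) - (g x - φ (g x - f x))| / dist y x with hw2
  have hnum1 : ∀ y, |(f y + φ (g y - f y)) - (f x + φ (g x - f x))|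
      ≤ (1 - θ y) * |f y - f x| + θ y * |g y - g x| := by
    intro y
    have hid : (f y + φ (g y - f y)) - (f x + φ (g x - f x))
        = (1 - θ y) * (f y - f x) + θ y * (g y - g x) := by
      have h1 := hθid y
      simp only [hb, ha] at h1 ⊢
      nlinarith [h1]
    rw [hid]
    refine le_trans (abs_add_le _ _) ?_
    rw [abs_mul, abs_mul, abs_of_nonneg (by linarith [(hθ01 y).2] : (0:ℝ) ≤ 1 - θ y),
      abs_of_nonneg (hθ01 y).1]
  have hnum2 : ∀ y, |(g y - φ (g y - f y)) - (g x - φ (g x - f x))|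
      ≤ (1 - θ y) * |g y - g x| + θ y * |f y - f x| := by
    intro y
    have hid : (g y - φ (g y - f y)) - (g x - φ (g x - f x))
        = (1 - θ y) * (g y - g x) + θ y * (f y - f x) := by
      have h1 := hθid y
      simp only [hb, ha] at h1 ⊢
      nlinarith [h1]
    rw [hid]
    refine le_trans (abs_add_le _ _) ?_
    rw [abs_mul, abs_mul, abs_of_nonneg (by linarith [(hθ01 y).2] : (0:ℝ) ≤ 1 - θ y),
      abs_of_nonneg (hθ01 y).1]
  have hwp1 : ∀ y, w1 y ≤ (1 - θ y) * p y + θ y * q y := by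
    intro y
    rcases (dist_nonneg : (0:ℝ) ≤ dist y x).eq_or_lt with h0 | h0
    · simp only [hw1, hp, hq, ← h0, div_zero]
      nlinarith [(hθ01 y).1, (hθ01 y).2]
    · have h2 : ((1 - θ y) * |f y - f x| + θ y * |g y - g x|) / dist y x
          = (1 - θ y) * (|f y - f x| / dist y x) + θ y * (|g y - g x| / dist y x) := by
        ring
      have h3 : |(f y + φ (g y - f y)) - (f x + φ (g x - f x))| / dist y x
          ≤ ((1 - θ y) * |f y - f x| + θ y * |g y - g x|) / dist y x := by
        gcongr
        exact hnum1 y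
      rw [h2] at h3
      simpa only [hw1, hp, hq] using h3
  have hwp2 : ∀ y, w2 y ≤ (1 - θ y) * q y + θ y * p y := by
    intro y
    rcases (dist_nonneg : (0:ℝ) ≤ dist y x).eq_or_lt with h0 | h0
    · simp only [hw2, hp, hq, ← h0, div_zero]
      nlinarith [(hθ01 y).1, (hθ01 y).2]
    · have h2 : ((1 - θ y) * |g y - g x| + θ y * |f y - f x|) / dist y x
          = (1 - θ y) * (|g y - g x| / dist y x) + θ y * (|f y - f x| / dist y x) := by
        ring
      have h3 : |(g y - φ (g y - f y)) - (g x - φ (g x - f x))| / dist y x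
          ≤ ((1 - θ y) * |g y - g x| + θ y * |f y - f x|) / dist y x := by
        gcongr
        exact hnum2 y
      rw [h2] at h3
      simpa only [hw2, hp, hq] using h3
  -- slopes
  set u : ℝ := localSlope f x with hu
  set v : ℝ := localSlope g x with hv
  have hu0 : 0 ≤ u := aux_slope_nonneg (hX x) p Kf hp0 hpK
  have hv0 : 0 ≤ v := aux_slope_nonneg (hX x) q Kg hq0 hqK
  have hw10 : ∀ y, 0 ≤ w1 y := fun y => div_nonneg (abs_nonneg _) dist_nonneg
  have hw20 : ∀ y, 0 ≤ w2 y := fun y => div_nonneg (abs_nonneg _) dist_nonneg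
  have hs1 : localSlope (fun y => f y + φ (g y - f y)) x ≤ (1 - lam) * u + lam * v :=
    aux_limsup_combo (𝓝[≠] x) p q w1 θ Kf Kg lam hlam0 hlam1 hp0 hpK hq0 hqK
      (fun y => (hθ01 y).1) (fun y => (hθ01 y).2) hθtendsto hw10 hwp1
  have hs2 : localSlope (fun y => g y - φ (g y - f y)) x ≤ (1 - lam) * v + lam * u :=
    aux_limsup_combo (𝓝[≠] x) q p w2 θ Kg Kf lam hlam0 hlam1 hq0 hqK hp0 hpK
      (fun y => (hθ01 y).1) (fun y => (hθ01 y).2) hθtendsto hw20 hwp2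
  have hw1K : ∀ y, w1 y ≤ Kf + Kg := by
    intro y
    refine (hwp1 y).trans ?_
    nlinarith [(hθ01 y).1, (hθ01 y).2, hp0 y, hpK y, hq0 y, hqK y]
  have hw2K : ∀ y, w2 y ≤ Kg + Kf := by
    intro y
    refine (hwp2 y).trans ?_
    nlinarith [(hθ01 y).1, (hθ01 y).2, hp0 y, hpK y, hq0 y, hqK y]
  have hs10 : 0 ≤ localSlope (fun y => f y + φ (g y - f y)) x :=
    aux_slope_nonneg (hX x) w1 (Kf + Kg) hw10 hw1K
  have hs20 : 0 ≤ localSlope (fun y => g y - φ (g y - f y)) x :=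
    aux_slope_nonneg (hX x) w2 (Kg + Kf) hw20 hw2K
  -- convexity
  have hA0 : (0:ℝ) ≤ (1 - lam) * u + lam * v :=
    add_nonneg (mul_nonneg (by linarith) hu0) (mul_nonneg hlam0 hv0)
  have hB0 : (0:ℝ) ≤ (1 - lam) * v + lam * u :=
    add_nonneg (mul_nonneg (by linarith) hv0) (mul_nonneg hlam0 hu0)
  have hm1 : ψ (localSlope (fun y => f y + φ (g y - f y)) x) ≤ ψ ((1 - lam) * u + lam * v) :=
    hψmono hs10 hA0 hs1
  have hm2 : ψ (localSlope (fun y => g y - φ (g y - f y)) x) ≤ ψ ((1 - lam) * v + lam * u) :=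
    hψmono hs20 hB0 hs2
  have hc1 : ψ ((1 - lam) * u + lam * v) ≤ (1 - lam) * ψ u + lam * ψ v := by
    simpa [smul_eq_mul] using
      hψconv.2 (mem_Ici.mpr hu0) (mem_Ici.mpr hv0) (by linarith : (0:ℝ) ≤ 1 - lam) hlam0
        (by ring)
  have hc2 : ψ ((1 - lam) * v + lam * u) ≤ (1 - lam) * ψ v + lam * ψ u := by
    simpa [smul_eq_mul] using
      hψconv.2 (mem_Ici.mpr hv0) (mem_Ici.mpr hu0) (by linarith : (0:ℝ) ≤ 1 - lam) hlam0
        (by ring)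
  linarith
end

section
/- For p ∈ (2,3), all x ≥ 0 and V ≥ 0, the inequality x·ln_p(x) ≥ x − exp_p(−V^p) − (p−2)·V^p·exp_p(−V^p) + (p−3)·V^p·x holds, where ln_p(s) = (s^{2−p} − 1)/(2−p) and exp_p(t) = (1 + (2−p)t)^{1/(2−p)}. -/
open Real Set

/-- For `p ∈ (2,3)`, all `x ≥ 0` and `V ≥ 0`:
`x·ln_p(x) ≥ x − exp_p(−V^p) − (p−2)·V^p·exp_p(−V^p) + (p−3)·V^p·x`,
where `ln_p(s) = (s^(2−p) − 1)/(2−p)` and `exp_p(t) = (1 + (2−p)t)^(1/(2−p))`. -/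
theorem mul_plog_ge (p x V : ℝ) (hp : p ∈ Ioo (2:ℝ) 3) (hx : 0 ≤ x) (hV : 0 ≤ V) :
    x * ((x ^ (2 - p) - 1) / (2 - p)) ≥
      x - (1 + (2 - p) * (-(V ^ p))) ^ (1 / (2 - p))
        - (p - 2) * V ^ p * ((1 + (2 - p) * (-(V ^ p))) ^ (1 / (2 - p)))
        + (p - 3) * V ^ p * x := by
  obtain ⟨hp2, hp3⟩ := hp
  set s : ℝ := 2 - p with hs
  have hs0 : s < 0 := by simp only [hs]; linarith
  have hs1 : -1 < s := by simp only [hs]; linarith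
  set w : ℝ := V ^ p with hw
  have hw0 : 0 ≤ w := Real.rpow_nonneg hV p
  set A : ℝ := 1 + s * (-w) with hA
  have hA1 : 1 ≤ A := by nlinarith
  have hA0 : 0 < A := by linarith
  set E : ℝ := A ^ (1 / s) with hE
  have hE0 : 0 < E := Real.rpow_pos_of_pos hA0 _
  have hEs : E ^ s = A := by
    rw [hE, ← Real.rpow_mul hA0.le, one_div_mul_cancel (ne_of_lt hs0),
      Real.rpow_one]
  -- key inequality: x ^ (1+s) ≤ (1+s) * A * x - s * A * E
  have key : x ^ (1 + s) ≤ (1 + s) * A * x - s * A * E := by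
    have hx' : -1 ≤ x / E - 1 := by
      have : 0 ≤ x / E := div_nonneg hx hE0.le
      linarith
    have hb := rpow_one_add_le_one_add_mul_self hx' (p := 1 + s)
      (by linarith) (by linarith)
    rw [add_sub_cancel] at hb
    have hE1s : E ^ (1 + s) = A * E := by
      rw [Real.rpow_add hE0, Real.rpow_one, hEs, mul_comm]
    have hxE : (x / E) ^ (1 + s) = x ^ (1 + s) / E ^ (1 + s) :=
      Real.div_rpow hx hE0.le _
    rw [hxE, hE1s] at hb
    have hAE : 0 < A * E := mul_pos hA0 hE0
    rw [div_le_iff₀ hAE] at hb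
    calc x ^ (1 + s) ≤ (1 + (1 + s) * (x / E - 1)) * (A * E) := hb
      _ = (1 + s) * A * (x / E * E) - s * A * E := by ring
      _ = (1 + s) * A * x - s * A * E := by
          rw [div_mul_cancel₀ _ (ne_of_gt hE0)]
  have hxmul : x * x ^ s = x ^ (1 + s) := by
    rcases eq_or_lt_of_le hx with rfl | hx0
    · rw [Real.zero_rpow (ne_of_lt hs0), Real.zero_rpow (by linarith), mul_zero]
    · rw [Real.rpow_add hx0, Real.rpow_one]
  rw [ge_iff_le, ← sub_nonneg]
  have hexp : x * ((x ^ s - 1) / s)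
      - (x - E - (p - 2) * w * E + (p - 3) * w * x)
      = (1 / s) * (x ^ (1 + s) - (1 + s) * A * x + s * A * E) := by
    have hne : (2:ℝ) - p ≠ 0 := by linarith
    rw [← hxmul, hA, hs]
    field_simp
    ring
  rw [hexp]
  have h1 : x ^ (1 + s) - (1 + s) * A * x + s * A * E ≤ 0 := by linarith
  have h2 : 1 / s ≤ 0 := by
    apply div_nonpos_of_nonneg_of_nonpos <;> linarith
  nlinarith [mul_nonneg (neg_nonneg.2 h2) (neg_nonneg.2 h1)]
end

section
/- Let E be a K-geodesically convex, lower semicontinuous functional on a geodesic metric space X. Then the descending slope admits the representation |D⁻E|(x) = sup_{y ≠ x} ( (E(x)−E(y))/d(x,y) + (K/2)·d(x,y) )₊ , and in particular |D⁻E| is lower semicontinuous. -/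
open Filter Topology Set
open scoped ENNReal

/-- The descending slope `|D⁻E|(x) = limsup_{y→x} [E(x)−E(y)]₊ / d(y,x)`,
valued in `[0,∞]`. -/
noncomputable def descendingSlopeE {X : Type*} [MetricSpace X] (E : X → ℝ) (x : X) : ℝ≥0∞ :=
  Filter.limsup (fun y => ENNReal.ofReal (max (E x - E y) 0 / dist y x)) (𝓝[≠] x)

private lemma ofReal_max_div (a d : ℝ) (hd : 0 < d) :
    ENNReal.ofReal (max a 0 / d) = ENNReal.ofReal (a / d) := by
  rcases le_total a 0 with h | h
  · have h1 : a / d ≤ 0 := div_nonpos_iff.mpr (Or.inr ⟨h, hd.le⟩)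
    rw [max_eq_right h, zero_div, ENNReal.ofReal_of_nonpos h1]
    simp
  · rw [max_eq_left h]

/-- If `E` is `K`-geodesically convex and lower semicontinuous on a geodesic
metric space, then the descending slope has the global representation
`|D⁻E|(x) = sup_{y ≠ x} ((E(x)−E(y))/d(x,y) + (K/2)d(x,y))₊`, and in particular `|D⁻E|` is
lower semicontinuous. -/
theorem descendingSlope_sup_repr {X : Type*} [MetricSpace X]
    (hX : ∀ x : X, (𝓝[≠] x).NeBot) (K : ℝ) (E : X → ℝ)
    (hlsc : LowerSemicontinuous E)
    (hconv : ∀ x₀ x₁ : X, ∃ γ : ℝ → X, γ 0 = x₀ ∧ γ 1 = x₁ ∧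
      (∀ s ∈ Icc (0:ℝ) 1, ∀ t ∈ Icc (0:ℝ) 1, dist (γ s) (γ t) = |t - s| * dist x₀ x₁) ∧
      (∀ t ∈ Icc (0:ℝ) 1, E (γ t) ≤ (1 - t) * E x₀ + t * E x₁
        - K / 2 * t * (1 - t) * dist x₀ x₁ ^ 2)) :
    (∀ x : X, descendingSlopeE E x =
      ⨆ (y : X) (_ : y ≠ x), ENNReal.ofReal ((E x - E y) / dist x y + K / 2 * dist x y)) ∧
    LowerSemicontinuous (descendingSlopeE E) := by
  set G : X → ℝ≥0∞ := fun x => ⨆ (y : X) (_ : y ≠ x),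
    ENNReal.ofReal ((E x - E y) / dist x y + K / 2 * dist x y) with hGdef
  have key : ∀ x, descendingSlopeE E x = G x := by
    intro x
    have hne := hX x
    apply le_antisymm
    · -- limsup ≤ G x
      have hbound : ∀ y, y ≠ x → ENNReal.ofReal (max (E x - E y) 0 / dist y x)
          ≤ G x + ENNReal.ofReal (|K| / 2 * dist y x) := by
        intro y hy
        have hd : (0:ℝ) < dist y x := dist_pos.2 hy
        have hterm : ENNReal.ofReal ((E x - E y) / dist x y + K / 2 * dist x y) ≤ G x := by
          refine le_iSup₂_of_le y hy le_rfl
        have hreal : (E x - E y) / dist y x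
            ≤ ((E x - E y) / dist x y + K / 2 * dist x y) + |K| / 2 * dist y x := by
          rw [dist_comm x y]
          nlinarith [neg_abs_le K, hd]
        calc ENNReal.ofReal (max (E x - E y) 0 / dist y x)
            = ENNReal.ofReal ((E x - E y) / dist y x) := ofReal_max_div _ _ hd
          _ ≤ ENNReal.ofReal (((E x - E y) / dist x y + K / 2 * dist x y)
                + |K| / 2 * dist y x) := ENNReal.ofReal_le_ofReal hreal
          _ ≤ ENNReal.ofReal ((E x - E y) / dist x y + K / 2 * dist x y)
                + ENNReal.ofReal (|K| / 2 * dist y x) := ENNReal.ofReal_add_le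
          _ ≤ G x + ENNReal.ofReal (|K| / 2 * dist y x) := by gcongr
      have htend : Tendsto (fun y => G x + ENNReal.ofReal (|K| / 2 * dist y x)) (𝓝[≠] x)
          (𝓝 (G x)) := by
        have h0 : Tendsto (fun y : X => |K| / 2 * dist y x) (𝓝[≠] x) (𝓝 0) := by
          have hc : Continuous fun y : X => |K| / 2 * dist y x :=
            continuous_const.mul (continuous_id.dist continuous_const)
          have := hc.tendsto x
          simp only [dist_self, mul_zero] at this
          exact this.mono_left nhdsWithin_le_nhds
        have h1 : Tendsto (fun y : X => ENNReal.ofReal (|K| / 2 * dist y x)) (𝓝[≠] x)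
            (𝓝 0) := by
          have := (ENNReal.continuous_ofReal.tendsto 0).comp h0
          simpa [Function.comp_def] using this
        have := h1.const_add (G x)
        simpa using this
      calc descendingSlopeE E x
          ≤ limsup (fun y => G x + ENNReal.ofReal (|K| / 2 * dist y x)) (𝓝[≠] x) := by
            refine limsup_le_limsup ?_
            filter_upwards [self_mem_nhdsWithin] with y hy
            exact hbound y hy
        _ = G x := htend.limsup_eq
    · -- G x ≤ limsup
      refine iSup₂_le fun y hy => ?_
      set u : X → ℝ≥0∞ := fun z => ENNReal.ofReal (max (E x - E z) 0 / dist z x) with hu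
      have hd : (0:ℝ) < dist x y := dist_pos.2 (Ne.symm hy)
      obtain ⟨γ, hγ0, hγ1, hdist, hE⟩ := hconv x y
      set D := dist x y with hD
      have hd0 : ∀ t ∈ Icc (0:ℝ) 1, dist (γ t) x = t * D := by
        intro t ht
        have := hdist t ht 0 ⟨le_refl 0, zero_le_one⟩
        rw [hγ0] at this
        rw [this, zero_sub, abs_neg, abs_of_nonneg ht.1]
      have hIoc : ∀ᶠ t in 𝓝[>] (0:ℝ), t ∈ Ioc (0:ℝ) 1 := by
        have h1 : ∀ᶠ t in 𝓝[>] (0:ℝ), t ∈ Iio (1:ℝ) :=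
          eventually_nhdsWithin_of_eventually_nhds
            (isOpen_Iio.eventually_mem (show (0:ℝ) ∈ Iio 1 by norm_num))
        have h2 : ∀ᶠ t in 𝓝[>] (0:ℝ), (0:ℝ) < t := self_mem_nhdsWithin
        filter_upwards [h1, h2] with t ht1 ht2
        exact ⟨ht2, le_of_lt ht1⟩
      have htendγ : Tendsto γ (𝓝[>] (0:ℝ)) (𝓝[≠] x) := by
        rw [tendsto_nhdsWithin_iff]
        constructor
        · rw [tendsto_iff_dist_tendsto_zero]
          have hbase : Tendsto (fun t : ℝ => t * D) (𝓝[>] (0:ℝ)) (𝓝 0) := by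
            have : Tendsto (fun t : ℝ => t * D) (𝓝 0) (𝓝 (0 * D)) :=
              (continuous_id.mul continuous_const).tendsto 0
            simpa using this.mono_left nhdsWithin_le_nhds
          refine hbase.congr' ?_
          filter_upwards [hIoc] with t ht
          exact (hd0 t ⟨ht.1.le, ht.2⟩).symm
        · filter_upwards [hIoc] with t ht
          have : dist (γ t) x = t * D := hd0 t ⟨ht.1.le, ht.2⟩
          have hpos : (0:ℝ) < t * D := mul_pos ht.1 hd
          simp only [Set.mem_compl_iff, Set.mem_singleton_iff]
          intro hcon
          rw [hcon, dist_self] at this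
          linarith [this ▸ hpos]
      refine le_of_forall_lt_imp_le_of_dense fun b hb => ?_
      -- b < ofReal ((E x - E y)/D + K/2 * D)
      have hg : Tendsto (fun t : ℝ => ENNReal.ofReal ((E x - E y) / D + K / 2 * (1 - t) * D))
          (𝓝[>] (0:ℝ)) (𝓝 (ENNReal.ofReal ((E x - E y) / D + K / 2 * D))) := by
        have hreal : Tendsto (fun t : ℝ => (E x - E y) / D + K / 2 * (1 - t) * D)
            (𝓝 (0:ℝ)) (𝓝 ((E x - E y) / D + K / 2 * (1 - 0) * D)) :=
          tendsto_const_nhds.add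
            (((tendsto_const_nhds.sub tendsto_id).const_mul (K / 2)).mul_const D)
        have := (ENNReal.continuous_ofReal.tendsto _).comp hreal
        simp only [sub_zero, mul_one, Function.comp] at this ⊢
        exact this.mono_left nhdsWithin_le_nhds
      have hblt : b < ENNReal.ofReal ((E x - E y) / D + K / 2 * D) := hb
      have hev : ∀ᶠ t in 𝓝[>] (0:ℝ), b ≤ u (γ t) := by
        filter_upwards [hIoc, hg.eventually_const_lt hblt] with t ht hgt
        refine le_trans hgt.le ?_
        have htIcc : t ∈ Icc (0:ℝ) 1 := ⟨ht.1.le, ht.2⟩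
        have hEt := hE t htIcc
        have hdt : dist (γ t) x = t * D := hd0 t htIcc
        have htD : (0:ℝ) < t * D := mul_pos ht.1 hd
        rw [hu]
        simp only [hdt]
        apply ENNReal.ofReal_le_ofReal
        have hnum : t * (E x - E y) + K / 2 * t * (1 - t) * D ^ 2 ≤ max (E x - E (γ t)) 0 := by
          refine le_trans ?_ (le_max_left _ _)
          nlinarith [hEt]
        have heq : ((E x - E y) / D + K / 2 * (1 - t) * D)
            = (t * (E x - E y) + K / 2 * t * (1 - t) * D ^ 2) / (t * D) := by
          have ht0 : t ≠ 0 := ht.1.ne'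
          field_simp
        rw [heq]
        exact (div_le_div_iff_of_pos_right htD).mpr hnum
      have hfreq : ∃ᶠ z in 𝓝[≠] x, b ≤ u z := htendγ.frequently hev.frequently
      exact le_limsup_of_frequently_le hfreq
  refine ⟨key, ?_⟩
  have hGlsc : LowerSemicontinuous G := by
    rw [hGdef]
    apply lowerSemicontinuous_iSup
    intro y
    intro x c hc
    by_cases hyx : y = x
    · exfalso
      simp [hyx] at hc
    · simp only [iSup_pos hyx] at hc
      have hctop : c ≠ ⊤ := ne_top_of_lt hc
      have hd : (0:ℝ) < dist x y := dist_pos.2 fun h => hyx h.symm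
      have hr : c.toReal < (E x - E y) / dist x y + K / 2 * dist x y :=
        (ENNReal.lt_ofReal_iff_toReal_lt hctop).1 hc
      set r := c.toReal with hrdef
      set ψ := (E x - E y) / dist x y + K / 2 * dist x y with hψ
      set ε := (ψ - r) * dist x y / 2 with hε
      have hεpos : 0 < ε := by
        rw [hε]
        have : 0 < ψ - r := by linarith
        positivity
      have hφ : r < (E x - ε - E y) / dist x y + K / 2 * dist x y := by
        have hεd : ε / dist x y = (ψ - r) / 2 := by
          rw [hε]; field_simp
        have hsplit : (E x - ε - E y) / dist x y
            = (E x - E y) / dist x y - ε / dist x y := by ring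
        rw [hsplit, hεd]
        clear_value ψ r ε
        linarith [hr, hψ]
      have hdc : Continuous fun x' : X => dist x' y := continuous_id.dist continuous_const
      have h1 : ∀ᶠ x' in 𝓝 x, E x - ε < E x' := hlsc x (E x - ε) (by linarith)
      have hcont : Tendsto (fun x' : X => (E x - ε - E y) / dist x' y + K / 2 * dist x' y)
          (𝓝 x) (𝓝 ((E x - ε - E y) / dist x y + K / 2 * dist x y)) := by
        exact ((tendsto_const_nhds.div hdc.continuousAt hd.ne').add
          (tendsto_const_nhds.mul hdc.continuousAt))
      have h2 : ∀ᶠ x' in 𝓝 x, r < (E x - ε - E y) / dist x' y + K / 2 * dist x' y :=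
        hcont.eventually_const_lt hφ
      have h3 : ∀ᶠ x' in 𝓝 x, 0 < dist x' y :=
        (hdc.continuousAt : Tendsto _ (𝓝 x) (𝓝 (dist x y))).eventually_const_lt hd
      filter_upwards [h1, h2, h3] with z hz1 hz2 hz3
      have hzy : y ≠ z := fun h => by rw [← h, dist_self] at hz3; exact lt_irrefl 0 hz3
      simp only [iSup_pos hzy]
      have hgoal : r < (E z - E y) / dist z y + K / 2 * dist z y := by
        have hmono : (E x - ε - E y) / dist z y ≤ (E z - E y) / dist z y :=
          (div_le_div_iff_of_pos_right hz3).mpr (by linarith)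
        linarith
      exact (ENNReal.lt_ofReal_iff_toReal_lt hctop).2 hgoal
  intro x c hc
  rw [key x] at hc
  filter_upwards [hGlsc x c hc] with z hz
  rw [key z]
  exact hz
end
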